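/- Let R be a semi-local ring containing a field of cardinality at least three, and let I ⊂ R be a proper ideal. If a ∈ R is such that the residue class of a in R/I is a unit, then there exists b ∈ I such that a + b is a unit in R. -/

import Mathlib

/-- Let `R` be a semi-local ring (commutative Noetherian with finitely
many maximal ideals) containing a field of cardinality at least three, and let `I ⊂ R`
be a proper ideal.  If `a ∈ R` is such that the residue class of `a` in `R/I` is a unit,
then there exists `b ∈ I` such that `a + b` is a unit in `R`. -/
theorem milnor_elem_unit_lift
    (R : Type*) [CommRing R] [IsNoetherianRing R] [Finite (MaximalSpectrum R)]
    (k : Type*) [Field k] [Algebra k R] (hk : (3 : Cardinal) ≤ Cardinal.mk k)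
    (I : Ideal R) (hI : I ≠ ⊤)
    (a : R) (ha : IsUnit (Ideal.Quotient.mk I a)) :
    ∃ b ∈ I, IsUnit (a + b) := by
  -- from ha, get c with a * c - 1 ∈ I
  obtain ⟨u, hu⟩ := ha
  obtain ⟨c, hc⟩ := Ideal.Quotient.mk_surjective (R := R) (I := I) ↑u⁻¹
  have hac : a * c - 1 ∈ I := by
    rw [← Ideal.Quotient.eq_zero_iff_mem]
    simp [hc, ← hu, ← Units.val_mul]
  -- index type for CRT
  set S := {m : MaximalSpectrum R // ¬ I ≤ m.asIdeal} with hS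
  haveI hFS : Finite S := Subtype.finite
  haveI : Finite (Option S) := Finite.of_equiv (S ⊕ PUnit.{1}) (Equiv.optionEquivSumPUnit S).symm
  let J : Option S → Ideal R := fun o => o.elim I (fun m => m.1.asIdeal)
  have hpair : Pairwise fun i j => IsCoprime (J i) (J j) := by
    have key : ∀ m : S, IsCoprime I m.1.asIdeal := by
      intro m
      rw [Ideal.isCoprime_iff_sup_eq]
      by_contra h
      have := m.1.isMaximal.eq_of_le h le_sup_right
      exact m.2 (this ▸ (le_sup_left : I ≤ I ⊔ m.1.asIdeal))
    rintro (_ | i) (_ | j) hij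
    · exact absurd rfl hij
    · exact key j
    · exact (key i).symm
    · rw [Ideal.isCoprime_iff_sup_eq]
      refine i.1.isMaximal.coprime_of_ne j.1.isMaximal ?_
      intro h
      exact hij (by
        congr 1
        exact Subtype.ext (MaximalSpectrum.ext h))
  let x : Option S → R := fun o => o.elim a (fun _ => 1)
  obtain ⟨r, hr⟩ := Ideal.exists_forall_sub_mem_ideal hpair x
  have hrI : r - a ∈ I := hr none
  refine ⟨r - a, hrI, ?_⟩
  rw [add_sub_cancel]
  -- r is a unit: it lies in no maximal ideal
  by_contra hru
  obtain ⟨m, hm, hrm⟩ := (Ideal.span {r}).exists_le_maximal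
    (by simpa [Ideal.span_singleton_eq_top] using hru)
  have hrm' : r ∈ m := hrm (Ideal.subset_span rfl)
  by_cases hIm : I ≤ m
  · -- a ∉ m since a*c - 1 ∈ I ≤ m, but r - a ∈ I ≤ m and r ∈ m give a ∈ m
    have ham : a ∈ m := by
      have := hIm hrI
      have : a = r - (r - a) := by ring
      rw [this]; exact m.sub_mem hrm' (hIm hrI)
    have h1 : (1 : R) ∈ m := by
      have h2 : a * c - (a * c - 1) = 1 := by ring
      rw [← h2]
      exact m.sub_mem (m.mul_mem_right c ham) (hIm hac)
    exact hm.ne_top (m.eq_top_iff_one.mpr h1)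
  · have := hr (some (⟨⟨m, hm⟩, hIm⟩ : S))
    have h1 : (1 : R) ∈ m := by
      have h2 : (1 : R) = r - (r - 1) := by ring
      rw [h2]
      exact m.sub_mem hrm' this
    exact hm.ne_top (m.eq_top_iff_one.mpr h1)
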